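/- Fix 0 ≤ k with 2k ≤ n and let σ_o(k) := (1, n−k+1)(2, n−k+2)⋯(k, n), an involution of {1,…,n} with k two-cycles. Then (R_{σ_o(k)})_{i,j} = max(0, j − i + 1 − (n − k)) for all i, j, and for every involution σ of {1,…,n} with exactly k two-cycles one has R_{σ_o(k)} ⪯ R_σ; thus σ_o(k) is the unique minimal element, with respect to ⪯ of rank matrices, among involutions with exactly k two-cycles. -/

import Mathlib

open Matrix

/-- A matrix is strictly upper-triangular. -/
def StrictUpper {n : ℕ} (x : Matrix (Fin n) (Fin n) ℂ) : Prop :=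
  ∀ a b : Fin n, b ≤ a → x a b = 0

/-- A matrix is (weakly) upper-triangular. -/
def UpperTri {n : ℕ} (x : Matrix (Fin n) (Fin n) ℂ) : Prop :=
  ∀ a b : Fin n, b < a → x a b = 0

/-- The orbit of a matrix under conjugation by invertible upper-triangular matrices. -/
def Borbit {n : ℕ} (x : Matrix (Fin n) (Fin n) ℂ) : Set (Matrix (Fin n) (Fin n) ℂ) :=
  {y | ∃ b : Matrix (Fin n) (Fin n) ℂ, IsUnit b ∧ UpperTri b ∧ y = b * x * b⁻¹}

/-- A permutation is an involution. -/
def IsInvol {n : ℕ} (σ : Equiv.Perm (Fin n)) : Prop := σ * σ = 1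

/-- The strictly upper-triangular part `N_σ` of the permutation matrix of `σ`. -/
def Nmat {n : ℕ} (σ : Equiv.Perm (Fin n)) : Matrix (Fin n) (Fin n) ℂ :=
  Matrix.of fun a b => if a < b ∧ σ a = b then (1 : ℂ) else 0

/-- The submatrix `π_{i,j}(x)` on rows and columns `i,…,j` (1-based), for `1 ≤ i ≤ j ≤ n`. -/
def blk {n : ℕ} (x : Matrix (Fin n) (Fin n) ℂ) (i j : ℕ)
    (h1 : 1 ≤ i) (h2 : i ≤ j) (h3 : j ≤ n) :
    Matrix (Fin (j + 1 - i)) (Fin (j + 1 - i)) ℂ :=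
  Matrix.of fun a b =>
    x ⟨i - 1 + a.1, by have := a.2; omega⟩ ⟨i - 1 + b.1, by have := b.2; omega⟩

/-- The rank matrix of `N_σ` (1-based indices, 0 outside the range `1 ≤ i < j ≤ n`). -/
noncomputable def Rfun {n : ℕ} (σ : Equiv.Perm (Fin n)) : ℕ → ℕ → ℕ := fun i j =>
  if h : 1 ≤ i ∧ i < j ∧ j ≤ n then (blk (Nmat σ) i j h.1 h.2.1.le h.2.2).rank
  else 0

/-- The number of two-cycles of an involution. -/
def numCycles {n : ℕ} (σ : Equiv.Perm (Fin n)) : ℕ :=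
  (Finset.univ.filter fun a : Fin n => a < σ a).card

/-- Evaluation of a polynomial in the matrix entries at a matrix. -/
noncomputable def evalMat {n : ℕ} (x : Matrix (Fin n) (Fin n) ℂ)
    (f : MvPolynomial (Fin n × Fin n) ℂ) : ℂ :=
  MvPolynomial.eval (fun p => x p.1 p.2) f

/-- The vanishing ideal of a set of matrices. -/
noncomputable def vanishingIdeal {n : ℕ} (S : Set (Matrix (Fin n) (Fin n) ℂ)) :
    Ideal (MvPolynomial (Fin n × Fin n) ℂ) where
  carrier := {f | ∀ x ∈ S, evalMat x f = 0}
  add_mem' := by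
    intro a b ha hb x hx
    simp only [evalMat, map_add] at *
    rw [ha x hx, hb x hx, add_zero]
  zero_mem' := by
    intro x hx
    simp [evalMat]
  smul_mem' := by
    intro c f hf x hx
    simp only [evalMat, smul_eq_mul, _root_.map_mul] at *
    rw [hf x hx, mul_zero]

/-- The Zariski closure of a set of matrices: the common zero set of its vanishing ideal. -/
noncomputable def zclosure {n : ℕ} (S : Set (Matrix (Fin n) (Fin n) ℂ)) :
    Set (Matrix (Fin n) (Fin n) ℂ) :=
  {x | ∀ f ∈ vanishingIdeal S, evalMat x f = 0}

/-- The space of upper-triangular matrices commuting with a given matrix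
(the Lie algebra of the stabilizer of `N` in `B`). -/
noncomputable def commUT {n : ℕ} (N : Matrix (Fin n) (Fin n) ℂ) :
    Submodule ℂ (Matrix (Fin n) (Fin n) ℂ) where
  carrier := {z | UpperTri z ∧ z * N = N * z}
  add_mem' := by
    rintro a b ⟨ha1, ha2⟩ ⟨hb1, hb2⟩
    refine ⟨fun p q h => ?_, by rw [add_mul, mul_add, ha2, hb2]⟩
    simp [Matrix.add_apply, ha1 p q h, hb1 p q h]
  zero_mem' := ⟨fun p q h => rfl, by simp⟩
  smul_mem' := by
    rintro c a ⟨ha1, ha2⟩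
    refine ⟨fun p q h => ?_, by rw [Matrix.smul_mul, Matrix.mul_smul, ha2]⟩
    simp [Matrix.smul_apply, ha1 p q h]



section StmtTenAux

open Finset

private lemma card_filter_fin' {m : ℕ} {P : ℕ → Prop} [DecidablePred P] {Q : Fin m → Prop}
    [DecidablePred Q] (h : ∀ a : Fin m, Q a ↔ P a.1) :
    (Finset.univ.filter Q).card = ((Finset.range m).filter P).card := by
  apply Finset.card_bij (fun a _ => a.1)
  · intro a ha; simp only [Finset.mem_filter, Finset.mem_univ, true_and] at ha
    simp only [Finset.mem_filter, Finset.mem_range]; exact ⟨a.2, (h a).mp ha⟩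
  · intro a _ b _ hab; exact Fin.ext hab
  · intro b hb; simp only [Finset.mem_filter, Finset.mem_range] at hb
    exact ⟨⟨b, hb.1⟩, by simp [Finset.mem_filter, (h ⟨b, hb.1⟩).mpr hb.2], rfl⟩

private lemma card_val_lt' (n k : ℕ) (hkn : k ≤ n) :
    (Finset.univ.filter fun a : Fin n => (a : ℕ) < k).card = k := by
  rw [card_filter_fin' (P := fun a => a < k) (fun a => Iff.rfl)]
  have : (Finset.range n).filter (fun a => a < k) = Finset.range k := by
    ext a; simp only [Finset.mem_filter, Finset.mem_range]; omega
  rw [this, Finset.card_range]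

private lemma rank_single_rows {m : ℕ} (M : Matrix (Fin m) (Fin m) ℂ) (g : Fin m → Fin m)
    (S : Finset (Fin m))
    (hrow : ∀ a ∈ S, M a = Pi.single (g a) 1)
    (hzero : ∀ a, a ∉ S → M a = 0)
    (hinj : ∀ a ∈ S, ∀ b ∈ S, g a = g b → a = b) :
    M.rank = S.card := by
  classical
  have hspan : Submodule.span ℂ (Set.range M) =
      Submodule.span ℂ (Set.range fun a : S => (Pi.single (g a.1) 1 : Fin m → ℂ)) := by
    apply le_antisymm
    · rw [Submodule.span_le]
      rintro _ ⟨a, rfl⟩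
      by_cases h : a ∈ S
      · rw [hrow a h]
        exact Submodule.subset_span ⟨⟨a, h⟩, rfl⟩
      · rw [hzero a h]; exact Submodule.zero_mem _
    · rw [Submodule.span_le]
      rintro _ ⟨a, rfl⟩
      show (Pi.single (g a.1) 1 : Fin m → ℂ) ∈ _
      rw [← hrow a.1 a.2]
      exact Submodule.subset_span ⟨a.1, rfl⟩
  have hli : LinearIndependent ℂ (fun a : S => (Pi.single (g a.1) 1 : Fin m → ℂ)) := by
    have h1 := (Pi.basisFun ℂ (Fin m)).linearIndependent
    have h2 := h1.comp (fun a : S => g a.1)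
      (fun a b hab => Subtype.ext (hinj a.1 a.2 b.1 b.2 hab))
    convert h2 using 1
    funext a
    simp [Function.comp, Pi.basisFun_apply]
  rw [Matrix.rank_eq_finrank_span_row]
  change Module.finrank ℂ (Submodule.span ℂ (Set.range M)) = _
  rw [hspan, finrank_span_eq_card hli, Fintype.card_coe]

/-- number of arcs `x < σ x` of `σ` lying inside the 0-based window `[l, r]` -/
private def cnt {n : ℕ} (σ : Equiv.Perm (Fin n)) (l r : ℕ) : ℕ :=
  (Finset.univ.filter fun x : Fin n =>
    l ≤ (x : ℕ) ∧ (x : ℕ) < ((σ x : Fin n) : ℕ) ∧ ((σ x : Fin n) : ℕ) ≤ r).card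

private lemma cnt_eq_zero {n : ℕ} (σ : Equiv.Perm (Fin n)) (l r : ℕ) (h : r ≤ l) :
    cnt σ l r = 0 := by
  rw [cnt, Finset.card_eq_zero, Finset.eq_empty_iff_forall_notMem]
  intro x hx
  simp only [Finset.mem_filter, Finset.mem_univ, true_and] at hx
  omega

private lemma Rfun_eq_cnt {n : ℕ} (σ : Equiv.Perm (Fin n)) (i j : ℕ)
    (h1 : 1 ≤ i) (h2 : i < j) (h3 : j ≤ n) :
    Rfun σ i j = cnt σ (i - 1) (j - 1) := by
  classical
  have hcond : 1 ≤ i ∧ i < j ∧ j ≤ n := ⟨h1, h2, h3⟩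
  rw [Rfun, dif_pos hcond]
  have hemb : ∀ a : Fin (j + 1 - i), i - 1 + a.1 < n := fun a => by have := a.2; omega
  set emb : Fin (j + 1 - i) → Fin n := fun a => ⟨i - 1 + a.1, hemb a⟩ with hembdef
  set S : Finset (Fin (j + 1 - i)) := Finset.univ.filter
    (fun a => i - 1 + a.1 < ((σ (emb a) : Fin n) : ℕ) ∧ ((σ (emb a) : Fin n) : ℕ) ≤ j - 1)
    with hS
  have hg : ∀ a : Fin (j + 1 - i), ((σ (emb a) : Fin n) : ℕ) ≤ j - 1 →
      ((σ (emb a) : Fin n) : ℕ) - (i - 1) < j + 1 - i := by intro a hc; omega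
  set g : Fin (j + 1 - i) → Fin (j + 1 - i) := fun a =>
    if hc : ((σ (emb a) : Fin n) : ℕ) ≤ j - 1 then ⟨_, hg a hc⟩ else a with hgdef
  have entry : ∀ a b : Fin (j + 1 - i),
      blk (Nmat σ) i j hcond.1 hcond.2.1.le hcond.2.2 a b
        = if emb a < emb b ∧ σ (emb a) = emb b then (1 : ℂ) else 0 := fun a b => rfl
  have key : (blk (Nmat σ) i j hcond.1 hcond.2.1.le hcond.2.2).rank = S.card := by
    apply rank_single_rows _ g
    · intro a ha
      rw [hS, Finset.mem_filter] at ha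
      obtain ⟨-, ha1, ha2⟩ := ha
      funext b
      rw [entry, Pi.single_apply]
      have hiff : (emb a < emb b ∧ σ (emb a) = emb b) ↔ b = g a := by
        rw [hgdef]
        simp only [dif_pos ha2]
        rw [Fin.lt_def, Fin.ext_iff, Fin.ext_iff]
        show (i - 1 + a.1 < i - 1 + b.1 ∧ ((σ (emb a) : Fin n) : ℕ) = i - 1 + b.1) ↔
          b.1 = ((σ (emb a) : Fin n) : ℕ) - (i - 1)
        omega
      simp only [hiff]
    · intro a ha
      rw [hS, Finset.mem_filter] at ha
      funext b
      have hne : ¬(emb a < emb b ∧ σ (emb a) = emb b) := by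
        rintro ⟨hlt, heq⟩
        rw [Fin.lt_def] at hlt
        rw [Fin.ext_iff] at heq
        have hea : (emb a : Fin n).1 = i - 1 + a.1 := rfl
        have heb : (emb b : Fin n).1 = i - 1 + b.1 := rfl
        have hb := b.2
        exact ha ⟨Finset.mem_univ a, by omega, by omega⟩
      rw [entry, if_neg hne]
      rfl
    · intro a ha b hb hab
      rw [hS, Finset.mem_filter] at ha hb
      rw [hgdef] at hab
      simp only [dif_pos ha.2.2, dif_pos hb.2.2, Fin.mk.injEq] at hab
      have : σ (emb a) = σ (emb b) := by
        rw [Fin.ext_iff]; omega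
      have := σ.injective this
      rw [Fin.ext_iff] at this ⊢
      have h' : i - 1 + a.1 = i - 1 + b.1 := this
      omega
  rw [key, cnt]
  apply Finset.card_bij (fun a _ => emb a)
  · intro a ha
    rw [hS, Finset.mem_filter] at ha
    simp only [Finset.mem_filter, Finset.mem_univ, true_and]
    exact ⟨by show i - 1 ≤ i - 1 + a.1; omega, ha.2.1, ha.2.2⟩
  · intro a _ b _ h
    rw [Fin.ext_iff] at h ⊢
    have : i - 1 + a.1 = i - 1 + b.1 := h
    omega
  · intro x hx
    simp only [Finset.mem_filter, Finset.mem_univ, true_and] at hx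
    have hx2 := x.2
    refine ⟨⟨x.1 - (i - 1), by omega⟩, ?_, ?_⟩
    · have hex : emb ⟨x.1 - (i - 1), by omega⟩ = x := by
        rw [Fin.ext_iff]; show i - 1 + (x.1 - (i - 1)) = x.1; omega
      rw [hS, Finset.mem_filter, hex]
      refine ⟨Finset.mem_univ _, ?_, hx.2.2⟩
      show i - 1 + (x.1 - (i - 1)) < ((σ x : Fin n) : ℕ)
      omega
    · rw [Fin.ext_iff]; show i - 1 + (x.1 - (i - 1)) = x.1; omega

private lemma cnt_ge {n k : ℕ} (hk : 2 * k ≤ n) (σ : Equiv.Perm (Fin n))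
    (hc : numCycles σ = k) (i j : ℕ) (h1 : 1 ≤ i) (h2 : i < j) (h3 : j ≤ n) :
    j + 1 - i - (n - k) ≤ cnt σ (i - 1) (j - 1) := by
  classical
  rw [cnt]
  set C := Finset.univ.filter (fun x : Fin n =>
    i - 1 ≤ (x : ℕ) ∧ (x : ℕ) < ((σ x : Fin n) : ℕ) ∧ ((σ x : Fin n) : ℕ) ≤ j - 1) with hC
  set T := Finset.univ.filter (fun a : Fin n => a < σ a) with hT
  have hsub : C ⊆ T := by
    intro x hx
    rw [hC, Finset.mem_filter] at hx
    rw [hT, Finset.mem_filter]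
    exact ⟨Finset.mem_univ _, Fin.lt_def.mpr hx.2.2.1⟩
  set Out := Finset.univ.filter (fun y : Fin n => (y : ℕ) < i - 1 ∨ j - 1 < (y : ℕ)) with hOut
  have hcard : (T \ C).card ≤ Out.card := by
    apply Finset.card_le_card_of_injOn (fun x : Fin n => if (x : ℕ) < i - 1 then x else σ x)
    · intro x hx
      rw [Finset.mem_coe, Finset.mem_sdiff, hT, hC, Finset.mem_filter, Finset.mem_filter] at hx
      obtain ⟨⟨-, hxlt⟩, hxnc⟩ := hx
      rw [Fin.lt_def] at hxlt
      simp only [Finset.mem_coe]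
      by_cases hcase : (x : ℕ) < i - 1
      · rw [if_pos hcase, hOut, Finset.mem_filter]
        exact ⟨Finset.mem_univ _, Or.inl hcase⟩
      · rw [if_neg hcase, hOut, Finset.mem_filter]
        refine ⟨Finset.mem_univ _, Or.inr ?_⟩
        by_contra hcon
        push_neg at hcon
        exact hxnc ⟨Finset.mem_univ _, by omega, hxlt, hcon⟩
    · intro x hx y hy hxy
      rw [Finset.coe_sdiff, Set.mem_diff] at hx hy
      obtain ⟨hxT, hxnC⟩ := hx
      obtain ⟨hyT, hynC⟩ := hy
      rw [hT, Finset.coe_filter, Set.mem_setOf_eq] at hxT hyT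
      rw [hC, Finset.coe_filter, Set.mem_setOf_eq] at hxnC hynC
      have hxlt := Fin.lt_def.mp hxT.2
      have hylt := Fin.lt_def.mp hyT.2
      simp only at hxy
      split_ifs at hxy with p q q
      · exact hxy
      · exfalso
        have hyj : j - 1 < ((σ y : Fin n) : ℕ) := by
          by_contra hcon; push_neg at hcon
          exact hynC ⟨Finset.mem_univ _, by omega, hylt, hcon⟩
        rw [← hxy] at hyj
        omega
      · exfalso
        have hxj : j - 1 < ((σ x : Fin n) : ℕ) := by
          by_contra hcon; push_neg at hcon
          exact hxnC ⟨Finset.mem_univ _, by omega, hxlt, hcon⟩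
        rw [hxy] at hxj
        omega
      · exact σ.injective hxy
  have hout : Out.card = n - (j - (i - 1)) := by
    rw [hOut, card_filter_fin' (P := fun y => y < i - 1 ∨ j - 1 < y) (fun a => Iff.rfl)]
    have heq : (Finset.range n).filter (fun y => y < i - 1 ∨ j - 1 < y)
        = Finset.range n \ Finset.Ico (i - 1) j := by
      ext y
      simp only [Finset.mem_filter, Finset.mem_range, Finset.mem_sdiff, Finset.mem_Ico]
      omega
    rw [heq, Finset.card_sdiff_of_subset (fun y hy => by
      simp only [Finset.mem_Ico] at hy; simp only [Finset.mem_range]; omega),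
      Finset.card_range, Nat.card_Ico]
  have h5 := Finset.card_sdiff_add_card_eq_card hsub
  have h6 : T.card = k := hc
  omega

end StmtTenAux

/-- `σ_o(k) = (1,n−k+1)(2,n−k+2)⋯(k,n)` is the unique minimal involution
with `k` two-cycles, and its rank matrix is `max(0, j−i+1−(n−k))`. -/
theorem stmt10 (n k : ℕ) (hn : 1 ≤ n) (hk : 2 * k ≤ n)
    (σo : Equiv.Perm (Fin n))
    (hσo : ∀ a : Fin n, ((σo a : Fin n) : ℕ) =
      if (a : ℕ) < k then (a : ℕ) + (n - k)
      else if n - k ≤ (a : ℕ) then (a : ℕ) - (n - k) else (a : ℕ)) :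
    IsInvol σo ∧ numCycles σo = k ∧
    (∀ i j, 1 ≤ i → i ≤ n → 1 ≤ j → j ≤ n → Rfun σo i j = j + 1 - i - (n - k)) ∧
    (∀ σ : Equiv.Perm (Fin n), IsInvol σ → numCycles σ = k →
      ∀ i j, Rfun σo i j ≤ Rfun σ i j) ∧
    (∀ τ : Equiv.Perm (Fin n), IsInvol τ → numCycles τ = k →
      (∀ σ : Equiv.Perm (Fin n), IsInvol σ → numCycles σ = k →
        ∀ i j, Rfun τ i j ≤ Rfun σ i j) → τ = σo) := by
  classical
  have hd1 : 1 ≤ n - k := by omega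
  -- Part 1: involution
  have hinvol : IsInvol σo := by
    apply Equiv.ext
    intro x
    have h1 := hσo x
    have h2 := hσo (σo x)
    rw [h1] at h2
    have hx := x.2
    have hval : ((σo (σo x) : Fin n) : ℕ) = (x : ℕ) := by split_ifs at h2 <;> omega
    show σo (σo x) = x
    exact Fin.ext hval
  -- Part 2: number of cycles
  have hTσo : Finset.univ.filter (fun a : Fin n => a < σo a)
      = Finset.univ.filter (fun a : Fin n => (a : ℕ) < k) := by
    ext x
    simp only [Finset.mem_filter, Finset.mem_univ, true_and, Fin.lt_def]
    have h1 := hσo x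
    have hx := x.2
    split_ifs at h1 <;> omega
  have hnum : numCycles σo = k := by
    rw [numCycles, hTσo, card_val_lt' n k (by omega)]
  -- counting for σo
  have hval : ∀ i j, 1 ≤ i → i < j → j ≤ n → cnt σo (i - 1) (j - 1) = j + 1 - i - (n - k) := by
    intro i j h1 h2 h3
    rw [cnt, card_filter_fin' (P := fun a => i - 1 ≤ a ∧ a < k ∧ a + (n - k) ≤ j - 1)
      (fun x => by
        have hx1 := hσo x
        have hx2 := x.2
        constructor
        · rintro ⟨p1, p2, p3⟩
          split_ifs at hx1 <;> omega
        · rintro ⟨p1, p2, p3⟩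
          split_ifs at hx1 <;> omega)]
    have hico : (Finset.range n).filter (fun a => i - 1 ≤ a ∧ a < k ∧ a + (n - k) ≤ j - 1)
        = Finset.Ico (i - 1) (min k (j - (n - k))) := by
      ext a
      simp only [Finset.mem_filter, Finset.mem_range, Finset.mem_Ico]
      omega
    rw [hico, Nat.card_Ico]
    omega
  -- Part 3
  have part3 : ∀ i j, 1 ≤ i → i ≤ n → 1 ≤ j → j ≤ n →
      Rfun σo i j = j + 1 - i - (n - k) := by
    intro i j hi hin hj hjn
    by_cases hij : i < j
    · rw [Rfun_eq_cnt σo i j hi hij hjn, hval i j hi hij hjn]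
    · rw [Rfun, dif_neg (by omega)]
      omega
  -- Part 4
  have part4 : ∀ σ : Equiv.Perm (Fin n), IsInvol σ → numCycles σ = k →
      ∀ i j, Rfun σo i j ≤ Rfun σ i j := by
    intro σ hσ hσc i j
    by_cases hcond : 1 ≤ i ∧ i < j ∧ j ≤ n
    · rw [Rfun_eq_cnt σo i j hcond.1 hcond.2.1 hcond.2.2,
        Rfun_eq_cnt σ i j hcond.1 hcond.2.1 hcond.2.2,
        hval i j hcond.1 hcond.2.1 hcond.2.2]
      exact cnt_ge hk σ hσc i j hcond.1 hcond.2.1 hcond.2.2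
    · rw [Rfun, dif_neg hcond]
      exact Nat.zero_le _
  refine ⟨hinvol, hnum, part3, part4, ?_⟩
  -- Part 5: uniqueness
  intro τ hτ hτc hmin
  have hττ : ∀ x, τ (τ x) = x := by
    intro x
    have := Equiv.ext_iff.mp hτ x
    simpa using this
  have heq : ∀ i j, 1 ≤ i → i < j → j ≤ n → cnt τ (i - 1) (j - 1) = j + 1 - i - (n - k) := by
    intro i j h1 h2 h3
    have hle := hmin σo hinvol hnum i j
    have hge := part4 τ hτ hτc i j
    rw [Rfun_eq_cnt τ i j h1 h2 h3] at hle hge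
    rw [part3 i j h1 (by omega) (by omega) h3] at hle hge
    omega
  have heq0 : ∀ l r : ℕ, l ≤ r → r < n → cnt τ l r = r + 1 - l - (n - k) := by
    intro l r hlr hr
    rcases Nat.eq_or_lt_of_le hlr with rfl | hlt
    · rw [cnt_eq_zero τ l l le_rfl]; omega
    · have h := heq (l + 1) (r + 1) (by omega) (by omega) (by omega)
      simp only [Nat.add_sub_cancel] at h
      rw [h]
      omega
  -- arcs of τ
  have harc : ∀ x : Fin n, (x : ℕ) < k → ((τ x : Fin n) : ℕ) = (x : ℕ) + (n - k) := by
    intro x hxk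
    have hx := x.2
    have h1 : cnt τ (x : ℕ) ((x : ℕ) + (n - k)) = 1 := by
      rw [heq0 _ _ (by omega) (by omega)]; omega
    have h2 : cnt τ ((x : ℕ) + 1) ((x : ℕ) + (n - k)) = 0 := by
      rw [heq0 _ _ (by omega) (by omega)]; omega
    have h3 : cnt τ (x : ℕ) ((x : ℕ) + (n - k) - 1) = 0 := by
      rw [heq0 _ _ (by omega) (by omega)]; omega
    rw [cnt, Finset.card_eq_one] at h1
    obtain ⟨x₀, hx₀⟩ := h1
    have hx₀mem : x₀ ∈ Finset.univ.filter (fun y : Fin n =>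
        (x : ℕ) ≤ (y : ℕ) ∧ (y : ℕ) < ((τ y : Fin n) : ℕ) ∧
          ((τ y : Fin n) : ℕ) ≤ (x : ℕ) + (n - k)) := by
      rw [hx₀]; exact Finset.mem_singleton_self x₀
    simp only [Finset.mem_filter, Finset.mem_univ, true_and] at hx₀mem
    obtain ⟨p1, p2, p3⟩ := hx₀mem
    rw [cnt, Finset.card_eq_zero, Finset.eq_empty_iff_forall_notMem] at h2 h3
    have hx₀val : (x₀ : ℕ) = (x : ℕ) := by
      by_contra hne
      refine h2 x₀ ?_
      simp only [Finset.mem_filter, Finset.mem_univ, true_and]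
      exact ⟨by omega, p2, p3⟩
    have hτx₀val : ((τ x₀ : Fin n) : ℕ) = (x : ℕ) + (n - k) := by
      by_contra hne
      refine h3 x₀ ?_
      simp only [Finset.mem_filter, Finset.mem_univ, true_and]
      exact ⟨by omega, p2, by omega⟩
    have hxx : x₀ = x := Fin.ext hx₀val
    rw [hxx] at hτx₀val
    exact hτx₀val
  have harc2 : ∀ x : Fin n, n - k ≤ (x : ℕ) → ((τ x : Fin n) : ℕ) = (x : ℕ) - (n - k) := by
    intro x hxd
    have hx := x.2
    set y : Fin n := ⟨(x : ℕ) - (n - k), by omega⟩ with hy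
    have hyk : (y : ℕ) < k := by show (x : ℕ) - (n - k) < k; omega
    have hτy := harc y hyk
    have hτyx : τ y = x := by
      apply Fin.ext
      rw [hτy]
      show (x : ℕ) - (n - k) + (n - k) = (x : ℕ)
      omega
    have h := congrArg τ hτyx
    rw [hττ] at h
    rw [← h]
  have hTτ : Finset.univ.filter (fun a : Fin n => a < τ a)
      = Finset.univ.filter (fun a : Fin n => (a : ℕ) < k) := by
    apply (Finset.eq_of_subset_of_card_le ?_ ?_).symm
    · intro a ha
      simp only [Finset.mem_filter, Finset.mem_univ, true_and] at ha ⊢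
      rw [Fin.lt_def, harc a ha]
      omega
    · rw [card_val_lt' n k (by omega)]
      exact le_of_eq hτc
  have hfix : ∀ x : Fin n, k ≤ (x : ℕ) → (x : ℕ) < n - k → τ x = x := by
    intro x h1 h2
    rcases lt_trichotomy x (τ x) with hlt | heqx | hgt
    · exfalso
      have hm : x ∈ Finset.univ.filter (fun a : Fin n => a < τ a) := by
        simp only [Finset.mem_filter, Finset.mem_univ, true_and]; exact hlt
      rw [hTτ] at hm
      simp only [Finset.mem_filter, Finset.mem_univ, true_and] at hm
      omega
    · exact heqx.symm
    · exfalso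
      have hmem : τ x ∈ Finset.univ.filter (fun a : Fin n => a < τ a) := by
        simp only [Finset.mem_filter, Finset.mem_univ, true_and]
        rw [hττ]
        exact hgt
      rw [hTτ] at hmem
      simp only [Finset.mem_filter, Finset.mem_univ, true_and] at hmem
      have harcx := harc (τ x) hmem
      rw [hττ] at harcx
      omega
  apply Equiv.ext
  intro x
  apply Fin.ext
  rw [hσo x]
  by_cases c1 : (x : ℕ) < k
  · rw [if_pos c1]
    exact harc x c1
  · rw [if_neg c1]
    by_cases c2 : n - k ≤ (x : ℕ)
    · rw [if_pos c2]
      exact harc2 x c2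
    · rw [if_neg c2]
      rw [hfix x (by omega) (by omega)]
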